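/- Let N > 0 and s > 0. Then the improper integral J(N,s) = lim_{R→∞} ∫_0^R e^{−iN(z+s)^2} dz exists in ℂ and satisfies |J(N,s)| ≤ 1/(Ns). -/

import Mathlib

open MeasureTheory Filter Set Complex


/-- For `N > 0` and `s > 0`, the improper integral
`J(N,s) = lim_{R→∞} ∫_0^R e^{-iN(z+s)^2} dz` exists in `ℂ` and `|J(N,s)| ≤ 1/(Ns)`. -/
theorem stmt11 (N s : ℝ) (hN : 0 < N) (hs : 0 < s) :
    ∃ J : ℂ,
      Filter.Tendsto
        (fun R : ℝ =>
          ∫ z in (0 : ℝ)..R, Complex.exp (-Complex.I * (N : ℂ) * ((z : ℂ) + (s : ℂ)) ^ 2))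
        Filter.atTop (nhds J) ∧
      ‖J‖ ≤ 1 / (N * s) := by
  have hNc : (N : ℂ) ≠ 0 := by exact_mod_cast hN.ne'
  set f : ℝ → ℂ := fun z => Complex.exp (-Complex.I * (N:ℂ) * ((z:ℂ) + (s:ℂ)) ^ 2) with hfdef
  set u : ℝ → ℂ := fun z => (-2 * Complex.I * (N:ℂ) * ((z:ℂ) + s))⁻¹ with hudef
  set u' : ℝ → ℂ := fun z => (2 * Complex.I * (N:ℂ))⁻¹ * (((z:ℂ) + s)^2)⁻¹ with hu'def
  set g : ℝ → ℂ := fun z => u' z * f z with hgdef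
  have hne : ∀ z : ℝ, 0 ≤ z → ((z:ℂ) + s) ≠ 0 := by
    intro z hz h
    have : (z + s : ℝ) = 0 := by exact_mod_cast congrArg Complex.re h
    linarith
  have h2IN : (2 : ℂ) * Complex.I * N ≠ 0 := by
    simp [Complex.I_ne_zero, hNc]
  have hm2IN : (-2 : ℂ) * Complex.I * (N : ℂ) ≠ 0 := by
    simp [Complex.I_ne_zero, hNc]
  -- |f z| = 1
  have hfnorm : ∀ z : ℝ, ‖f z‖ = 1 := by
    intro z
    rw [hfdef]
    simp only
    rw [Complex.norm_exp]
    have h0 : (-Complex.I * (N:ℂ) * ((z:ℂ) + (s:ℂ)) ^ 2).re = 0 := by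
      simp [Complex.mul_re, Complex.mul_im, pow_two]
    rw [h0, Real.exp_zero]
  -- norm of u
  have hunorm : ∀ z : ℝ, 0 ≤ z → ‖u z‖ = (2 * N * (z + s))⁻¹ := by
    intro z hz
    rw [hudef]
    simp only [norm_inv]
    congr 1
    have h2 : ((z:ℂ) + (s:ℂ)) = ((z + s : ℝ) : ℂ) := by push_cast; ring
    rw [h2, norm_mul, norm_mul, norm_mul, Complex.norm_I, Complex.norm_real,
      Complex.norm_real, Real.norm_eq_abs, Real.norm_eq_abs, norm_neg, Complex.norm_two,
      abs_of_pos hN, _root_.abs_of_pos (by linarith : (0:ℝ) < z + s)]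
    ring
  -- derivative of f
  have hderiv_f : ∀ z : ℝ, HasDerivAt f ((-2 * Complex.I * N * ((z:ℂ) + s)) * f z) z := by
    intro z
    have hinner : HasDerivAt (fun w : ℂ => -Complex.I * (N:ℂ) * (w + s)^2)
        (-Complex.I * N * (2 * ((z:ℂ)+s))) (z:ℂ) := by
      have := (((hasDerivAt_id (z:ℂ)).add_const (s:ℂ)).pow 2).const_mul (-Complex.I * (N:ℂ))
      simpa using this
    have := hinner.cexp.comp_ofReal
    convert this using 1
    ring
  -- derivative of u
  have hderiv_u : ∀ z : ℝ, 0 ≤ z → HasDerivAt u (u' z) z := by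
    intro z hz
    have h1 : HasDerivAt (fun w : ℂ => (-2 * Complex.I * (N:ℂ) * (w + s))⁻¹)
        (-(-2 * Complex.I * (N:ℂ)) / (-2 * Complex.I * (N:ℂ) * ((z:ℂ) + s))^2) (z:ℂ) := by
      have hd : HasDerivAt (fun w : ℂ => -2 * Complex.I * (N:ℂ) * (w + s))
          (-2 * Complex.I * (N:ℂ)) (z:ℂ) := by
        simpa using ((hasDerivAt_id (z:ℂ)).add_const (s:ℂ)).const_mul (-2 * Complex.I * (N:ℂ))
      have hne' : -2 * Complex.I * (N:ℂ) * ((z:ℂ) + s) ≠ 0 := by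
        apply mul_ne_zero _ (hne z hz)
        simpa [neg_mul] using h2IN
      exact hd.inv hne'
    have := h1.comp_ofReal
    convert this using 1
    rw [hu'def]
    simp only
    rw [eq_div_iff (pow_ne_zero 2 (mul_ne_zero hm2IN (hne z hz)))]
    field_simp [Complex.I_ne_zero, hNc, hne z hz]
  -- continuity facts
  have hcont_u' : ContinuousOn u' (Ici 0) := by
    apply ContinuousOn.mul continuousOn_const
    apply ContinuousOn.inv₀
    · fun_prop
    · intro z hz
      exact pow_ne_zero 2 (hne z hz)
  have hcont_f : Continuous f := by
    apply Complex.continuous_exp.comp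
    fun_prop
  have hcont_g : ContinuousOn g (Ici 0) := hcont_u'.mul hcont_f.continuousOn
  -- real integrability of (z+s)⁻²  on Ioi 0, and value of integral
  have hG : ∀ x : ℝ, x ∈ Ici (0:ℝ) → HasDerivAt (fun z : ℝ => -(z + s)⁻¹) (((x + s)^2)⁻¹) x := by
    intro x hx
    have hxs : x + s ≠ 0 := by have : (0:ℝ) ≤ x := hx; positivity
    have := (((hasDerivAt_id x).add_const s).inv hxs).neg
    refine this.congr_deriv ?_
    simp only [id]; ring
  have hGtop : Tendsto (fun z : ℝ => -(z + s)⁻¹) atTop (nhds 0) := by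
    rw [show (0:ℝ) = -0 by ring]
    exact ((tendsto_atTop_add_const_right atTop s tendsto_id).inv_tendsto_atTop).neg
  have hint_sq : IntegrableOn (fun z : ℝ => ((z + s)^2)⁻¹) (Ioi 0) := by
    apply integrableOn_Ioi_deriv_of_nonneg
      ((hG 0 self_mem_Ici).continuousAt.continuousWithinAt)
      (fun x hx => hG x (Ioi_subset_Ici_self hx)) (fun x hx => by positivity) hGtop
  have hval_sq : ∫ z in Ioi (0:ℝ), ((z + s)^2)⁻¹ = s⁻¹ := by
    rw [integral_Ioi_of_hasDerivAt_of_tendsto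
      ((hG 0 self_mem_Ici).continuousAt.continuousWithinAt)
      (fun x hx => hG x (Ioi_subset_Ici_self hx)) hint_sq hGtop]
    simp
  -- integrability of g on Ioi 0
  have hgnorm : ∀ z : ℝ, 0 ≤ z → ‖g z‖ = (2*N)⁻¹ * ((z + s)^2)⁻¹ := by
    intro z hz
    rw [hgdef]
    simp only
    rw [norm_mul, hfnorm, mul_one, hu'def]
    simp only
    rw [norm_mul, norm_inv, norm_inv]
    have h1 : ‖(2:ℂ) * Complex.I * (N:ℂ)‖ = 2 * N := by
      simp [abs_of_pos hN]
    have h2 : ‖((z:ℂ) + s)^2‖ = (z + s)^2 := by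
      have : ((z:ℂ) + (s:ℂ)) = ((z + s : ℝ) : ℂ) := by push_cast; ring
      rw [this, ← Complex.ofReal_pow, Complex.norm_real, Real.norm_eq_abs,
        _root_.abs_of_nonneg (by positivity : (0:ℝ) ≤ (z+s)^2)]
    rw [h1, h2]
  have hint_g : IntegrableOn g (Ioi 0) := by
    apply Integrable.mono' (hint_sq.const_mul ((2*N)⁻¹))
      (hcont_g.mono Ioi_subset_Ici_self |>.aestronglyMeasurable measurableSet_Ioi)
    filter_upwards [ae_restrict_mem measurableSet_Ioi] with z hz
    rw [hgnorm z (le_of_lt hz)]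
  -- integration by parts on [0, R]
  have hparts : ∀ R : ℝ, 0 ≤ R →
      (∫ z in (0:ℝ)..R, f z) = u R * f R - u 0 * f 0 - ∫ z in (0:ℝ)..R, g z := by
    intro R hR
    have huIcc : Set.uIcc (0:ℝ) R = Set.Icc 0 R := uIcc_of_le hR
    have hv'cont : Continuous (fun z : ℝ => (-2 * Complex.I * (N:ℂ) * ((z:ℂ) + s)) * f z) := by
      apply Continuous.mul _ hcont_f
      fun_prop
    have key := intervalIntegral.integral_mul_deriv_eq_deriv_mul
      (u := u) (v := f) (u' := u') (v' := fun z => (-2 * Complex.I * N * ((z:ℂ) + s)) * f z)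
      (a := (0:ℝ)) (b := R)
      (fun x hx => hderiv_u x (by rw [huIcc] at hx; exact hx.1))
      (fun x _ => hderiv_f x)
      ((hcont_u'.mono (by rw [huIcc]; exact fun x hx => hx.1)).intervalIntegrable)
      (hv'cont.continuousOn.intervalIntegrable)
    have hLHS : (∫ z in (0:ℝ)..R, u z * ((-2 * Complex.I * N * ((z:ℂ) + s)) * f z))
        = ∫ z in (0:ℝ)..R, f z := by
      apply intervalIntegral.integral_congr
      intro x hx
      rw [huIcc] at hx
      have hx0 : (0:ℝ) ≤ x := hx.1
      rw [hudef]
      exact inv_mul_cancel_left₀ (mul_ne_zero hm2IN (hne x hx0)) (f x)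
    rw [hLHS] at key
    exact key
  -- the candidate limit
  set J : ℂ := -(u 0 * f 0) - ∫ z in Ioi (0:ℝ), g z with hJdef
  refine ⟨J, ?_, ?_⟩
  · -- convergence
    have h1 : Tendsto (fun R : ℝ => u R * f R) atTop (nhds 0) := by
      apply squeeze_zero_norm' (a := fun R : ℝ => (2 * N * (R + s))⁻¹)
      · filter_upwards [eventually_ge_atTop (0:ℝ)] with R hR
        rw [norm_mul, hfnorm, mul_one, hunorm R hR]
      · apply Tendsto.inv_tendsto_atTop
        apply Tendsto.const_mul_atTop (by positivity : (0:ℝ) < 2 * N)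
        exact tendsto_atTop_add_const_right atTop s tendsto_id
    have h2 : Tendsto (fun R : ℝ => ∫ z in (0:ℝ)..R, g z) atTop
        (nhds (∫ z in Ioi (0:ℝ), g z)) :=
      intervalIntegral_tendsto_integral_Ioi 0 hint_g tendsto_id
    have h3 : Tendsto (fun R : ℝ => u R * f R - u 0 * f 0 - ∫ z in (0:ℝ)..R, g z) atTop
        (nhds J) := by
      rw [hJdef, show -(u 0 * f 0) - ∫ z in Ioi (0:ℝ), g z
        = (0 - u 0 * f 0) - ∫ z in Ioi (0:ℝ), g z by ring]
      exact (h1.sub_const _).sub h2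
    apply h3.congr'
    filter_upwards [eventually_ge_atTop (0:ℝ)] with R hR
    exact (hparts R hR).symm
  · -- the bound
    have hu0 : ‖u 0 * f 0‖ = (2 * (N * s))⁻¹ := by
      rw [norm_mul, hfnorm, mul_one, hunorm 0 le_rfl]
      norm_num
      ring
    have hintbound : ‖∫ z in Ioi (0:ℝ), g z‖ ≤ (2 * (N * s))⁻¹ := by
      calc ‖∫ z in Ioi (0:ℝ), g z‖ ≤ ∫ z in Ioi (0:ℝ), ‖g z‖ :=
            norm_integral_le_integral_norm g
        _ = ∫ z in Ioi (0:ℝ), (2*N)⁻¹ * ((z + s)^2)⁻¹ := by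
            apply setIntegral_congr_fun measurableSet_Ioi
            intro z hz
            exact hgnorm z (le_of_lt hz)
        _ = (2*N)⁻¹ * ∫ z in Ioi (0:ℝ), ((z + s)^2)⁻¹ := by
            rw [integral_const_mul]
        _ = (2 * (N * s))⁻¹ := by rw [hval_sq]; field_simp
    calc ‖J‖ ≤ ‖-(u 0 * f 0)‖ + ‖∫ z in Ioi (0:ℝ), g z‖ := norm_sub_le _ _
      _ = (2 * (N * s))⁻¹ + ‖∫ z in Ioi (0:ℝ), g z‖ := by rw [norm_neg, hu0]
      _ ≤ (2 * (N * s))⁻¹ + (2 * (N * s))⁻¹ := by linarith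
      _ = 1 / (N * s) := by field_simp; ring
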